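/- Let n, N, p₁, …, p_N ∈ ℕ₊, A ∈ ℝ^{n×n}, C_i ∈ ℝ^{p_i×n}, and let C ∈ ℝ^{p×n} (p = Σp_i) stack the C_i. Suppose there exist a symmetric positive definite P_a ∈ ℝ^{n×n}, Y ∈ ℝ^{n×p} and ρ > 0 with P_aA + AᵀP_a + YC + CᵀYᵀ + 2ρP_a ≺ 0. Partition H̄ = P_a⁻¹Y = (H̄₁, …, H̄_N) with H̄_i ∈ ℝ^{n×p_i}. Let L ∈ ℝ^{N×N}, ζ ∈ ℝ^N with ζ_i > 0, ζᵀ1_N = 1, L·1_N = 0, ζᵀL = 0, and let Y₁, Y₂ ∈ ℝ^{N×(N−1)} satisfy Y₂ᵀY₁ = I_{N−1}, ζᵀY₁ = 0, Y₂ᵀ1_N = 0, and Δ = Y₂ᵀLY₁ has Δᵀ + Δ ≻ 0. Set H_i = H̄_i/ζ_i, Ã = I_N ⊗ A, H̃ = diag{H_i}, C̃ = diag{C_i}. Then there exist ν₀ > 0 and κ > 0 such that for every ν ≥ ν₀, every differentiable function e : [0,∞) → ℝ^{Nn} satisfying ė(t) = (Ã + H̃C̃ − ν(L ⊗ I_n))e(t)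 for all t ≥ 0 satisfies ‖e(t)‖ ≤ κ·e^{−ρt}·‖e(0)‖ for all t ≥ 0. -/

import Mathlib

/-
Statement 1 (Lemma 3, exponential-stability part).
N ≥ 1 agents are encoded as N = mN + 1 (so that the Lemma-1 matrices Y₁, Y₂ have
N - 1 = mN columns).  The stacked output matrix C and the block matrices
Ã = I_N ⊗ A, H̃ = diag{H_i}, C̃ = diag{C_i} are built explicitly; sigma types
index the stacked outputs.  M ≺ 0 is encoded as (-M).PosDef.
-/

open Matrix
open scoped Kronecker

/-- The Euclidean norm of a finitely-indexed real vector. -/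
noncomputable def euclNorm {ι : Type*} [Fintype ι] (x : ι → ℝ) : ℝ :=
  Real.sqrt (x ⬝ᵥ x)

namespace DOHelper


variable {ι : Type*} [Fintype ι]

/-- quadratic form of a matrix -/
noncomputable def q (M : Matrix ι ι ℝ) (x : ι → ℝ) : ℝ := x ⬝ᵥ M.mulVec x

lemma q_continuous (M : Matrix ι ι ℝ) : Continuous (q M) := by
  unfold q dotProduct Matrix.mulVec
  exact continuous_finset_sum _ fun i _ => (continuous_apply i).mul
    (continuous_finset_sum _ fun j _ => (continuous_const.mul (continuous_apply j)))

lemma q_smul (M : Matrix ι ι ℝ) (t : ℝ) (x : ι → ℝ) : q M (t • x) = t^2 * q M x := by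
  unfold q
  rw [Matrix.mulVec_smul, dotProduct_smul, smul_dotProduct]
  simp [smul_eq_mul]; ring

lemma q_addM (M N : Matrix ι ι ℝ) (x : ι → ℝ) : q (M + N) x = q M x + q N x := by
  unfold q; rw [Matrix.add_mulVec, dotProduct_add]

lemma q_smulM (c : ℝ) (M : Matrix ι ι ℝ) (x : ι → ℝ) : q (c • M) x = c * q M x := by
  unfold q; rw [Matrix.smul_mulVec, dotProduct_smul, smul_eq_mul]

lemma q_subM (M N : Matrix ι ι ℝ) (x : ι → ℝ) : q (M - N) x = q M x - q N x := by
  unfold q; rw [Matrix.sub_mulVec, dotProduct_sub]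

lemma dot_self_nonneg (x : ι → ℝ) : 0 ≤ x ⬝ᵥ x :=
  Finset.sum_nonneg fun i _ => mul_self_nonneg _

lemma dot_self_pos {x : ι → ℝ} (hx : x ≠ 0) : 0 < x ⬝ᵥ x := by
  rcases (dot_self_nonneg x).lt_or_eq with h | h
  · exact h
  · exact absurd ((dotProduct_self_eq_zero).mp h.symm) hx

/-- decompose a nonzero vector as positive multiple of a unit vector -/
lemma exists_unit_decomp {x : ι → ℝ} (hx : x ≠ 0) :
    ∃ t : ℝ, 0 < t ∧ ∃ u : ι → ℝ, u ⬝ᵥ u = 1 ∧ x = t • u := by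
  have hpos := dot_self_pos hx
  refine ⟨Real.sqrt (x ⬝ᵥ x), Real.sqrt_pos.mpr hpos, (Real.sqrt (x ⬝ᵥ x))⁻¹ • x, ?_, ?_⟩
  · rw [dotProduct_smul, smul_dotProduct]
    simp only [smul_eq_mul]
    rw [← mul_assoc, ← mul_inv]
    rw [Real.mul_self_sqrt hpos.le]
    field_simp
  · rw [smul_smul, mul_inv_cancel₀ (Real.sqrt_pos.mpr hpos).ne', one_smul]

lemma isCompact_sphere' : IsCompact {x : ι → ℝ | x ⬝ᵥ x = 1} := by
  have hclosed : IsClosed {x : ι → ℝ | x ⬝ᵥ x = 1} := by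
    have : Continuous fun x : ι → ℝ => x ⬝ᵥ x := by
      unfold dotProduct
      exact continuous_finset_sum _ fun i _ => (continuous_apply i).mul (continuous_apply i)
    exact isClosed_eq this continuous_const
  refine (Metric.isCompact_of_isClosed_isBounded hclosed ?_)
  rw [Metric.isBounded_iff_subset_closedBall 0]
  refine ⟨1, fun x hx => ?_⟩
  simp only [Metric.mem_closedBall, dist_zero_right]
  rw [pi_norm_le_iff_of_nonneg zero_le_one]
  intro i
  have h1 : x i * x i ≤ x ⬝ᵥ x := by
    unfold dotProduct
    exact Finset.single_le_sum (fun j _ => mul_self_nonneg (x j)) (Finset.mem_univ i)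
  rw [hx] at h1
  rw [Real.norm_eq_abs, abs_le_one_iff_mul_self_le_one]
  exact h1




lemma q_zero (M : Matrix ι ι ℝ) : q M 0 = 0 := by
  unfold q; simp

/-- main compactness lemma -/
lemma exists_nu0 (K₀ K₁ : Matrix ι ι ℝ)
    (h1 : ∀ x, 0 ≤ q K₁ x)
    (h0 : ∀ x, x ≠ 0 → q K₁ x = 0 → q K₀ x < 0) :
    ∃ ν₀ : ℝ, 0 < ν₀ ∧ ∀ ν, ν₀ ≤ ν → ∀ x, q K₀ x - ν * q K₁ x ≤ 0 := by
  classical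
  set S : Set (ι → ℝ) := {x | x ⬝ᵥ x = 1} with hS
  set T : Set (ι → ℝ) := {x ∈ S | 0 ≤ q K₀ x} with hT
  have hTc : IsCompact T := by
    apply isCompact_sphere'.inter_right
    exact isClosed_le continuous_const (q_continuous K₀)
  -- reduce to unit sphere
  have key : ∀ ν₀ : ℝ, 0 < ν₀ → (∀ u ∈ S, ∀ ν, ν₀ ≤ ν → q K₀ u - ν * q K₁ u ≤ 0) →
      (∀ ν, ν₀ ≤ ν → ∀ x, q K₀ x - ν * q K₁ x ≤ 0) := by
    intro ν₀ hν₀ h ν hν x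
    by_cases hx : x = 0
    · simp [hx, q_zero]
    · obtain ⟨t, ht, u, hu, rfl⟩ := exists_unit_decomp hx
      rw [q_smul, q_smul]
      have := h u hu ν hν
      nlinarith [sq_nonneg t]
  by_cases hTe : T = ∅
  · refine ⟨1, one_pos, key 1 one_pos ?_⟩
    intro u hu ν hν
    have hq0 : q K₀ u < 0 := by
      by_contra hc
      push_neg at hc
      have : u ∈ T := ⟨hu, hc⟩
      rw [hTe] at this; exact this
    have : 0 ≤ ν * q K₁ u := mul_nonneg (le_trans zero_le_one hν) (h1 u)
    linarith
  · obtain ⟨x₀, hx₀⟩ := Set.nonempty_iff_ne_empty.mpr hTe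
    obtain ⟨xm, hxmT, hxm⟩ := hTc.exists_isMinOn ⟨x₀, hx₀⟩ (q_continuous K₁).continuousOn
    obtain ⟨xM, hxMT, hxM⟩ := hTc.exists_isMaxOn ⟨x₀, hx₀⟩ (q_continuous K₀).continuousOn
    set m := q K₁ xm with hm
    set c := q K₀ xM with hc
    have hmpos : 0 < m := by
      rcases (h1 xm).lt_or_eq with h | h
      · exact h
      · exfalso
        have hxmne : xm ≠ 0 := by
          intro hz
          have : xm ⬝ᵥ xm = 1 := hxmT.1
          rw [hz] at this; simp at this
        exact absurd (h0 xm hxmne h.symm) (not_lt.mpr hxmT.2)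
    have hcnn : 0 ≤ c := le_trans hxMT.2 le_rfl
    refine ⟨c / m + 1, by positivity, key _ (by positivity) ?_⟩
    intro u hu ν hν
    by_cases hq : 0 ≤ q K₀ u
    · have huT : u ∈ T := ⟨hu, hq⟩
      have h1' : m ≤ q K₁ u := hxm huT
      have h2' : q K₀ u ≤ c := hxM huT
      have : (c / m + 1) * m ≤ ν * q K₁ u := by
        apply mul_le_mul hν h1' hmpos.le (le_trans (by positivity) hν)
      have hcm : (c / m + 1) * m = c + m := by field_simp
      linarith
    · push_neg at hq
      have : 0 ≤ ν * q K₁ u := mul_nonneg (le_trans (by positivity) hν) (h1 u)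
      linarith

/-- eigenvalue-type bounds for a positive-definite quadratic form -/
lemma exists_pd_bounds (P : Matrix ι ι ℝ) (h : ∀ x, x ≠ 0 → 0 < q P x) :
    ∃ c₁ c₂ : ℝ, 0 < c₁ ∧ 0 < c₂ ∧ ∀ x, c₁ * (x ⬝ᵥ x) ≤ q P x ∧ q P x ≤ c₂ * (x ⬝ᵥ x) := by
  classical
  set S : Set (ι → ℝ) := {x | x ⬝ᵥ x = 1} with hS
  by_cases hSe : S = ∅
  · refine ⟨1, 1, one_pos, one_pos, fun x => ?_⟩
    by_cases hx : x = 0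
    · simp [hx, q_zero]
    · obtain ⟨t, ht, u, hu, rfl⟩ := exists_unit_decomp hx
      exact absurd hu (by intro h'; have : u ∈ S := h'; rw [hSe] at this; exact this)
  · obtain ⟨x₀, hx₀⟩ := Set.nonempty_iff_ne_empty.mpr hSe
    obtain ⟨xm, hxmS, hxm⟩ := isCompact_sphere'.exists_isMinOn ⟨x₀, hx₀⟩ (q_continuous P).continuousOn
    obtain ⟨xM, hxMS, hxM⟩ := isCompact_sphere'.exists_isMaxOn ⟨x₀, hx₀⟩ (q_continuous P).continuousOn
    have hxmne : xm ≠ 0 := by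
      intro hz
      have : xm ⬝ᵥ xm = 1 := hxmS
      rw [hz] at this; simp at this
    have hm : 0 < q P xm := h xm hxmne
    refine ⟨q P xm, q P xM, hm, lt_of_lt_of_le hm (hxM hxmS), fun x => ?_⟩
    by_cases hx : x = 0
    · simp [hx, q_zero]
    · obtain ⟨t, ht, u, hu, rfl⟩ := exists_unit_decomp hx
      have hdot : (t • u) ⬝ᵥ (t • u) = t^2 := by
        rw [dotProduct_smul, smul_dotProduct, hu]; simp [smul_eq_mul]; ring
      rw [q_smul, hdot]
      have h1' : q P xm ≤ q P u := hxm hu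
      have h2' : q P u ≤ q P xM := hxM hu
      constructor
      · nlinarith [sq_nonneg t]
      · nlinarith [sq_nonneg t]




/-- derivative of quadratic form along a curve -/
lemma hasDerivAt_q (M : Matrix ι ι ℝ) (e : ℝ → ι → ℝ) (v : ι → ℝ) (t : ℝ)
    (he : HasDerivAt e v t) :
    HasDerivAt (fun s => q M (e s)) (v ⬝ᵥ M.mulVec (e t) + e t ⬝ᵥ M.mulVec v) t := by
  have hcomp : ∀ i, HasDerivAt (fun s => e s i) (v i) t := fun i => hasDerivAt_pi.mp he i
  have key : HasDerivAt (fun s => ∑ i, ∑ j, M i j * (e s i * e s j))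
      (∑ i, ∑ j, M i j * (v i * e t j + e t i * v j)) t := by
    apply HasDerivAt.fun_sum
    intro i _
    apply HasDerivAt.fun_sum
    intro j _
    exact ((hcomp i).mul (hcomp j)).const_mul (M i j)
  have h1 : (fun s => q M (e s)) = fun s => ∑ i, ∑ j, M i j * (e s i * e s j) := by
    funext s
    unfold q dotProduct Matrix.mulVec
    simp only [dotProduct, Finset.mul_sum]
    congr 1; funext i; congr 1; funext j; ring
  have h2 : v ⬝ᵥ M.mulVec (e t) + e t ⬝ᵥ M.mulVec v
      = ∑ i, ∑ j, M i j * (v i * e t j + e t i * v j) := by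
    simp only [dotProduct, Matrix.mulVec, Finset.mul_sum, ← Finset.sum_add_distrib]
    congr 1; funext i; congr 1; funext j; ring
  rw [h1, h2]
  exact key

/-- Gronwall-type exponential decay -/
lemma exp_decay (f f' : ℝ → ℝ) (c : ℝ)
    (hd : ∀ t, 0 ≤ t → HasDerivAt f (f' t) t)
    (hle : ∀ t, 0 ≤ t → f' t ≤ -c * f t) :
    ∀ t, 0 ≤ t → f t ≤ Real.exp (-c * t) * f 0 := by
  set g : ℝ → ℝ := fun t => Real.exp (c * t) * f t with hg
  have hgd : ∀ t, 0 ≤ t → HasDerivAt g (Real.exp (c * t) * (c * f t + f' t)) t := by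
    intro t ht
    have h1 : HasDerivAt (fun s => Real.exp (c * s)) (c * Real.exp (c * t)) t := by
      have := ((hasDerivAt_id t).const_mul c).exp
      simp only [id_eq, id, mul_one] at this
      convert this using 1
      ring
    have := h1.mul (hd t ht)
    exact this.congr_deriv (by ring)
  have hanti : AntitoneOn g (Set.Ici (0:ℝ)) := by
    apply antitoneOn_of_deriv_nonpos (convex_Ici 0)
    · intro t ht
      exact ((hgd t ht).continuousAt).continuousWithinAt
    · intro t ht
      rw [interior_Ici] at ht
      exact (hgd t (le_of_lt ht)).differentiableAt.differentiableWithinAt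
    · intro t ht
      rw [interior_Ici] at ht
      rw [(hgd t (le_of_lt ht)).deriv]
      have := hle t (le_of_lt ht)
      have hexp : (0:ℝ) < Real.exp (c * t) := Real.exp_pos _
      nlinarith
  intro t ht
  have := hanti (Set.self_mem_Ici) ht ht
  simp only [hg, mul_zero, Real.exp_zero, one_mul] at this
  -- this : exp (c*t) * f t ≤ f 0
  have hexp : (0:ℝ) < Real.exp (c * t) := Real.exp_pos _
  rw [neg_mul, Real.exp_neg]
  calc f t = (Real.exp (c*t))⁻¹ * (Real.exp (c * t) * f t) := by field_simp
    _ ≤ (Real.exp (c*t))⁻¹ * f 0 := by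
        apply mul_le_mul_of_nonneg_left this (by positivity)



lemma dot_pair {ι : Type*} [Fintype ι] (M P : Matrix ι ι ℝ) (x : ι → ℝ) :
    x ⬝ᵥ (Mᵀ * P).mulVec x = (M.mulVec x) ⬝ᵥ (P.mulVec x) := by
  rw [← Matrix.mulVec_mulVec, Matrix.mulVec_transpose, dotProduct_comm,
    ← Matrix.dotProduct_mulVec, dotProduct_comm]

lemma dot_transpose {ι : Type*} [Fintype ι] (M : Matrix ι ι ℝ) (v : ι → ℝ) :
    v ⬝ᵥ Mᵀ.mulVec v = (M.mulVec v) ⬝ᵥ v := by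
  rw [Matrix.mulVec_transpose, dotProduct_comm, ← Matrix.dotProduct_mulVec, dotProduct_comm]

lemma dot_symm {ι : Type*} [Fintype ι] {P : Matrix ι ι ℝ} (hP : Pᵀ = P) (u w : ι → ℝ) :
    u ⬝ᵥ P.mulVec w = (P.mulVec u) ⬝ᵥ w := by
  rw [Matrix.dotProduct_mulVec, ← Matrix.vecMul_transpose, hP]
end DOHelper

namespace DO


section swaps
variable {α β γ δ : Type*} [Fintype α] [Fintype β] [Fintype γ] [Fintype δ]

lemma sw12 (f : α → β → γ → δ → ℝ) :
    ∑ a, ∑ b, ∑ c, ∑ d, f a b c d = ∑ b, ∑ a, ∑ c, ∑ d, f a b c d := Finset.sum_comm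

lemma sw23 (f : α → β → γ → δ → ℝ) :
    ∑ a, ∑ b, ∑ c, ∑ d, f a b c d = ∑ a, ∑ c, ∑ b, ∑ d, f a b c d :=
  Finset.sum_congr rfl fun _ _ => Finset.sum_comm

lemma sw34 (f : α → β → γ → δ → ℝ) :
    ∑ a, ∑ b, ∑ c, ∑ d, f a b c d = ∑ a, ∑ b, ∑ d, ∑ c, f a b c d :=
  Finset.sum_congr rfl fun _ _ => Finset.sum_congr rfl fun _ _ => Finset.sum_comm
end swaps

variable {n mN : ℕ} {p : Fin (mN+1) → ℕ}

def amap (ζ : Fin (mN+1) → ℝ) (x : Fin (mN+1) × Fin n → ℝ) : Fin n → ℝ :=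
  fun j => ∑ i, ζ i * x (i, j)

def bmap (Y₂ : Matrix (Fin (mN+1)) (Fin mN) ℝ) (x : Fin (mN+1) × Fin n → ℝ) :
    Fin mN × Fin n → ℝ :=
  fun kj => ∑ i, Y₂ i kj.1 * x (i, kj.2)

def Pt1 (ζ : Fin (mN+1) → ℝ) (Pa : Matrix (Fin n) (Fin n) ℝ) :
    Matrix (Fin (mN+1) × Fin n) (Fin (mN+1) × Fin n) ℝ :=
  Matrix.of fun x y => ζ x.1 * ζ y.1 * Pa x.2 y.2

def Pt2 (Y₂ : Matrix (Fin (mN+1)) (Fin mN) ℝ) :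
    Matrix (Fin (mN+1) × Fin n) (Fin (mN+1) × Fin n) ℝ :=
  Matrix.of fun x y => (∑ k, Y₂ x.1 k * Y₂ y.1 k) * (if x.2 = y.2 then (1:ℝ) else 0)

noncomputable def Ptil (ζ : Fin (mN+1) → ℝ) (Y₂ : Matrix (Fin (mN+1)) (Fin mN) ℝ)
    (Pa : Matrix (Fin n) (Fin n) ℝ) :
    Matrix (Fin (mN+1) × Fin n) (Fin (mN+1) × Fin n) ℝ :=
  Pt1 ζ Pa + Pt2 Y₂

lemma dot_Pt1 (ζ : Fin (mN+1) → ℝ) (Pa : Matrix (Fin n) (Fin n) ℝ)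
    (x y : Fin (mN+1) × Fin n → ℝ) :
    x ⬝ᵥ (Pt1 ζ Pa).mulVec y = amap ζ x ⬝ᵥ Pa.mulVec (amap ζ y) := by
  unfold Pt1 amap dotProduct Matrix.mulVec dotProduct
  simp only [Matrix.of_apply, Fintype.sum_prod_type, Finset.mul_sum, Finset.sum_mul]
  rw [sw12, sw34, sw23, sw34]
  refine Finset.sum_congr rfl fun j _ => Finset.sum_congr rfl fun j' _ =>
    Finset.sum_congr rfl fun i' _ => Finset.sum_congr rfl fun i _ => by ring

lemma dot_Pt2 (Y₂ : Matrix (Fin (mN+1)) (Fin mN) ℝ)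
    (x y : Fin (mN+1) × Fin n → ℝ) :
    x ⬝ᵥ (Pt2 Y₂).mulVec y = bmap Y₂ x ⬝ᵥ bmap Y₂ y := by
  unfold Pt2 bmap dotProduct Matrix.mulVec dotProduct
  simp only [Matrix.of_apply, Fintype.sum_prod_type, mul_ite, ite_mul, mul_zero, zero_mul,
    mul_one, Finset.sum_ite_eq, Finset.sum_ite_eq', Finset.mem_univ, if_true,
    Finset.mul_sum, Finset.sum_mul]
  rw [sw34, sw23, sw12, sw23, sw34]
  refine Finset.sum_congr rfl fun k _ => Finset.sum_congr rfl fun j _ =>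
    Finset.sum_congr rfl fun i' _ => Finset.sum_congr rfl fun i _ => by ring

lemma dot_Ptil (ζ : Fin (mN+1) → ℝ) (Y₂ : Matrix (Fin (mN+1)) (Fin mN) ℝ)
    (Pa : Matrix (Fin n) (Fin n) ℝ) (x y : Fin (mN+1) × Fin n → ℝ) :
    x ⬝ᵥ (Ptil ζ Y₂ Pa).mulVec y
      = amap ζ x ⬝ᵥ Pa.mulVec (amap ζ y) + bmap Y₂ x ⬝ᵥ bmap Y₂ y := by
  unfold Ptil
  rw [Matrix.add_mulVec, dotProduct_add, dot_Pt1, dot_Pt2]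

section entries
variable (L : Matrix (Fin (mN+1)) (Fin (mN+1)) ℝ) (A : Matrix (Fin n) (Fin n) ℝ)

lemma Ltil_mulVec (x : Fin (mN+1) × Fin n → ℝ) (i : Fin (mN+1)) (j : Fin n) :
    ((L ⊗ₖ (1 : Matrix (Fin n) (Fin n) ℝ)).mulVec x) (i, j) = ∑ i', L i i' * x (i', j) := by
  unfold Matrix.mulVec dotProduct
  simp [Fintype.sum_prod_type, Matrix.one_apply, mul_ite, ite_mul, mul_zero, zero_mul,
    Finset.sum_ite_eq, Finset.sum_ite_eq']

lemma Atil_mulVec (x : Fin (mN+1) × Fin n → ℝ) (i : Fin (mN+1)) (j : Fin n) :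
    (((1 : Matrix (Fin (mN+1)) (Fin (mN+1)) ℝ) ⊗ₖ A).mulVec x) (i, j)
      = ∑ j', A j j' * x (i, j') := by
  unfold Matrix.mulVec dotProduct
  simp [Fintype.sum_prod_type, Matrix.one_apply, mul_ite, ite_mul, mul_zero, zero_mul,
    Finset.sum_ite_eq, Finset.sum_ite_eq']

variable (ζ : Fin (mN+1) → ℝ) (Cm : ∀ i : Fin (mN + 1), Matrix (Fin (p i)) (Fin n) ℝ)
  (W : Matrix (Fin n) ((i : Fin (mN + 1)) × Fin (p i)) ℝ)

lemma Ctil_mulVec (x : Fin (mN+1) × Fin n → ℝ) (q : (i : Fin (mN + 1)) × Fin (p i)) :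
    ((Matrix.of fun (q : (i : Fin (mN + 1)) × Fin (p i)) (x : Fin (mN+1) × Fin n) =>
        if q.1 = x.1 then Cm q.1 q.2 x.2 else 0).mulVec x) q
      = ∑ j', Cm q.1 q.2 j' * x (q.1, j') := by
  unfold Matrix.mulVec dotProduct
  simp [Fintype.sum_prod_type, mul_ite, ite_mul, mul_zero, zero_mul,
    Finset.sum_ite_eq, Finset.sum_ite_eq']

lemma Htil_mulVec (w : (i : Fin (mN + 1)) × Fin (p i) → ℝ) (i : Fin (mN+1)) (j : Fin n) :
    ((Matrix.of fun (x : Fin (mN+1) × Fin n) (q : (i : Fin (mN + 1)) × Fin (p i)) =>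
        if x.1 = q.1 then (ζ q.1)⁻¹ * W x.2 q else 0).mulVec w) (i, j)
      = (ζ i)⁻¹ * ∑ k : Fin (p i), W j ⟨i, k⟩ * w ⟨i, k⟩ := by
  unfold Matrix.mulVec dotProduct
  rw [← Finset.univ_sigma_univ, Finset.sum_sigma]
  simp only [Matrix.of_apply, ite_mul, zero_mul, Finset.sum_ite_irrel, Finset.sum_const_zero,
    Finset.sum_ite_eq, Finset.mem_univ, if_true, Finset.mul_sum]
  exact Finset.sum_congr rfl fun k _ => by ring

end entries
section contract
variable (L : Matrix (Fin (mN+1)) (Fin (mN+1)) ℝ) (A : Matrix (Fin n) (Fin n) ℝ)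
  (ζ : Fin (mN+1) → ℝ) (Y₁ Y₂ : Matrix (Fin (mN+1)) (Fin mN) ℝ)
  (Cm : ∀ i : Fin (mN + 1), Matrix (Fin (p i)) (Fin n) ℝ)
  (W : Matrix (Fin n) ((i : Fin (mN + 1)) × Fin (p i)) ℝ)

def cvec (x : Fin (mN+1) × Fin n → ℝ) : (i : Fin (mN + 1)) × Fin (p i) → ℝ :=
  fun q => ∑ j', Cm q.1 q.2 j' * x (q.1, j')

lemma amap_Atil (x : Fin (mN+1) × Fin n → ℝ) :
    amap ζ (((1 : Matrix (Fin (mN+1)) (Fin (mN+1)) ℝ) ⊗ₖ A).mulVec x)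
      = A.mulVec (amap ζ x) := by
  funext j
  unfold amap
  simp only [Atil_mulVec]
  unfold Matrix.mulVec dotProduct
  simp only [Finset.mul_sum]
  rw [Finset.sum_comm]
  exact Finset.sum_congr rfl fun j' _ => Finset.sum_congr rfl fun i _ => by ring

lemma amap_Ltil (hζL : Matrix.vecMul ζ L = 0) (x : Fin (mN+1) × Fin n → ℝ) :
    amap ζ ((L ⊗ₖ (1 : Matrix (Fin n) (Fin n) ℝ)).mulVec x) = 0 := by
  funext j
  unfold amap
  simp only [Ltil_mulVec, Finset.mul_sum]
  rw [Finset.sum_comm]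
  have h0 : ∀ i' : Fin (mN+1), (∑ i, ζ i * (L i i' * x (i', j))) = 0 := by
    intro i'
    have hz : ∑ i, ζ i * L i i' = 0 := by
      simpa [Matrix.vecMul, dotProduct] using congr_fun hζL i'
    calc ∑ i, ζ i * (L i i' * x (i', j)) = (∑ i, ζ i * L i i') * x (i', j) := by
          rw [Finset.sum_mul]; exact Finset.sum_congr rfl fun i _ => by ring
      _ = 0 := by rw [hz, zero_mul]
  rw [Finset.sum_congr rfl fun i' _ => h0 i']
  simp

lemma amap_HC (hζ : ∀ i, ζ i ≠ 0) (x : Fin (mN+1) × Fin n → ℝ) :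
    amap ζ (((Matrix.of fun (x : Fin (mN+1) × Fin n) (q : (i : Fin (mN + 1)) × Fin (p i)) =>
        if x.1 = q.1 then (ζ q.1)⁻¹ * W x.2 q else 0) *
      (Matrix.of fun (q : (i : Fin (mN + 1)) × Fin (p i)) (x : Fin (mN+1) × Fin n) =>
        if q.1 = x.1 then Cm q.1 q.2 x.2 else 0)).mulVec x)
      = W.mulVec (cvec Cm x) := by
  funext j
  rw [← Matrix.mulVec_mulVec]
  unfold amap
  have hsimp : ∀ i : Fin (mN+1), ∀ jj : Fin n,
      ((Matrix.of fun (x : Fin (mN+1) × Fin n) (q : (i : Fin (mN + 1)) × Fin (p i)) =>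
        if x.1 = q.1 then (ζ q.1)⁻¹ * W x.2 q else 0).mulVec
        ((Matrix.of fun (q : (i : Fin (mN + 1)) × Fin (p i)) (x : Fin (mN+1) × Fin n) =>
        if q.1 = x.1 then Cm q.1 q.2 x.2 else 0).mulVec x)) (i, jj)
      = (ζ i)⁻¹ * ∑ k : Fin (p i), W jj ⟨i, k⟩ * cvec Cm x ⟨i, k⟩ := by
    intro i jj
    rw [Htil_mulVec]
    congr 1
    exact Finset.sum_congr rfl fun k _ => by rw [Ctil_mulVec]; rfl
  simp only [hsimp]
  have hcancel : ∀ i : Fin (mN+1), ζ i * ((ζ i)⁻¹ * ∑ k : Fin (p i), W j ⟨i, k⟩ * cvec Cm x ⟨i, k⟩)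
      = ∑ k : Fin (p i), W j ⟨i, k⟩ * cvec Cm x ⟨i, k⟩ := by
    intro i
    rw [← mul_assoc, mul_inv_cancel₀ (hζ i), one_mul]
  rw [Finset.sum_congr rfl fun i _ => hcancel i]
  unfold Matrix.mulVec dotProduct
  rw [← Finset.univ_sigma_univ, Finset.sum_sigma]

lemma bmap_Ltil (Δm : Matrix (Fin mN) (Fin mN) ℝ) (hY2L : Y₂ᵀ * L = Δm * Y₂ᵀ)
    (x : Fin (mN+1) × Fin n → ℝ) (k : Fin mN) (j : Fin n) :
    bmap Y₂ ((L ⊗ₖ (1 : Matrix (Fin n) (Fin n) ℝ)).mulVec x) (k, j)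
      = ∑ m, Δm k m * bmap Y₂ x (m, j) := by
  unfold bmap
  simp only [Ltil_mulVec, Finset.mul_sum]
  rw [Finset.sum_comm]
  have h1 : ∀ i', (∑ i, Y₂ i k * (L i i' * x (i', j))) = (Y₂ᵀ * L) k i' * x (i', j) := by
    intro i'
    rw [Matrix.mul_apply, Finset.sum_mul]
    exact Finset.sum_congr rfl fun i _ => by simp [Matrix.transpose_apply]; ring
  rw [Finset.sum_congr rfl fun i' _ => h1 i', hY2L]
  simp only [Matrix.mul_apply, Matrix.transpose_apply, Finset.sum_mul, Finset.mul_sum]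
  rw [Finset.sum_comm]
  exact Finset.sum_congr rfl fun m _ => Finset.sum_congr rfl fun i' _ => by ring

end contract
section sim
variable (L : Matrix (Fin (mN+1)) (Fin (mN+1)) ℝ)
  (ζ : Fin (mN+1) → ℝ) (Y₁ Y₂ : Matrix (Fin (mN+1)) (Fin mN) ℝ)

/-- the resolution of the identity  I = 1ζᵀ + Y₁Y₂ᵀ -/
lemma resolution
    (hζ1 : ζ ⬝ᵥ (fun _ => (1 : ℝ)) = 1)
    (hY21 : Y₂ᵀ * Y₁ = 1)
    (hζY1 : Matrix.vecMul ζ Y₁ = 0)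
    (hY2one : Y₂ᵀ.mulVec (fun _ => (1 : ℝ)) = 0) :
    ∀ i i' : Fin (mN+1), (if i = i' then (1:ℝ) else 0) = ζ i' + ∑ k, Y₁ i k * Y₂ i' k := by
  classical
  set T : Matrix (Fin (mN+1)) (Fin (mN+1)) ℝ :=
    Matrix.of fun i j => Fin.cases 1 (fun k => Y₁ i k) j with hT
  set U : Matrix (Fin (mN+1)) (Fin (mN+1)) ℝ :=
    Matrix.of fun r j => Fin.cases (ζ j) (fun k => Y₂ j k) r with hU
  have hUT : U * T = 1 := by
    ext r c
    rw [Matrix.mul_apply]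
    refine Fin.cases ?_ (fun k => ?_) r <;> refine Fin.cases ?_ (fun k' => ?_) c
    · simpa [hT, hU, Matrix.one_apply, dotProduct] using hζ1
    · have := congr_fun hζY1 k'
      simp only [Matrix.vecMul, dotProduct, Pi.zero_apply] at this
      simp [hT, hU, Matrix.one_apply, Fin.succ_ne_zero, (Fin.succ_ne_zero k').symm, this]
    · have := congr_fun hY2one k
      simp only [Matrix.mulVec, dotProduct, Pi.zero_apply, Matrix.transpose_apply, mul_one] at this
      simp [hT, hU, Matrix.one_apply, Fin.succ_ne_zero, this]
    · have := congr_fun (congr_fun hY21 k) k'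
      simp only [Matrix.mul_apply, Matrix.transpose_apply, Matrix.one_apply] at this
      simp only [hT, hU, Matrix.of_apply, Fin.cases_succ, Matrix.one_apply, Fin.succ_inj]
      rw [← this]
  have hTU : T * U = 1 := mul_eq_one_comm.mp hUT
  intro i i'
  have := congr_fun (congr_fun hTU i) i'
  rw [Matrix.mul_apply, Fin.sum_univ_succ] at this
  simp only [hT, hU, Matrix.of_apply, Fin.cases_zero, Fin.cases_succ, one_mul,
    Matrix.one_apply] at this
  rw [← this]

lemma decomp
    (hζ1 : ζ ⬝ᵥ (fun _ => (1 : ℝ)) = 1)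
    (hY21 : Y₂ᵀ * Y₁ = 1)
    (hζY1 : Matrix.vecMul ζ Y₁ = 0)
    (hY2one : Y₂ᵀ.mulVec (fun _ => (1 : ℝ)) = 0)
    (x : Fin (mN+1) × Fin n → ℝ) (i : Fin (mN+1)) (j : Fin n) :
    x (i, j) = amap ζ x j + ∑ k, Y₁ i k * bmap Y₂ x (k, j) := by
  classical
  have hres := resolution ζ Y₁ Y₂ hζ1 hY21 hζY1 hY2one
  unfold amap bmap
  have h1 : x (i, j) = ∑ i' : Fin (mN+1), (if i = i' then (1:ℝ) else 0) * x (i', j) := by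
    simp
  rw [h1]
  rw [Finset.sum_congr rfl fun i' _ => by rw [hres i i']]
  simp only [add_mul, Finset.sum_add_distrib, Finset.sum_mul]
  congr 1
  rw [Finset.sum_comm]
  refine Finset.sum_congr rfl fun k _ => ?_
  rw [Finset.mul_sum]
  exact Finset.sum_congr rfl fun i' _ => by ring

/-- Y₂ᵀ L = Δ Y₂ᵀ -/
lemma Y2L_eq
    (hζ1 : ζ ⬝ᵥ (fun _ => (1 : ℝ)) = 1)
    (hY21 : Y₂ᵀ * Y₁ = 1)
    (hζY1 : Matrix.vecMul ζ Y₁ = 0)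
    (hY2one : Y₂ᵀ.mulVec (fun _ => (1 : ℝ)) = 0)
    (hL1 : L.mulVec (fun _ => (1 : ℝ)) = 0) :
    Y₂ᵀ * L = (Y₂ᵀ * L * Y₁) * Y₂ᵀ := by
  classical
  have hres := resolution ζ Y₁ Y₂ hζ1 hY21 hζY1 hY2one
  have hrow : ∀ i, ∑ l, L i l = 0 := by
    intro i
    simpa [Matrix.mulVec, dotProduct] using congr_fun hL1 i
  ext k i'
  have h1 : (Y₂ᵀ * L) k i' = ∑ l, (Y₂ᵀ * L) k l * (if l = i' then (1:ℝ) else 0) := by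
    simp
  rw [h1, Finset.sum_congr rfl fun l (_ : l ∈ Finset.univ) => by rw [hres l i']]
  simp only [mul_add, Finset.sum_add_distrib, Finset.mul_sum]
  have hz : (∑ l, (Y₂ᵀ * L) k l * ζ i') = 0 := by
    rw [← Finset.sum_mul]
    have hzz : (∑ l, (Y₂ᵀ * L) k l) = 0 := by
      simp only [Matrix.mul_apply, Matrix.transpose_apply]
      rw [Finset.sum_comm]
      have hzi : ∀ i, (∑ l, Y₂ i k * L i l) = 0 := by
        intro i; rw [← Finset.mul_sum, hrow, mul_zero]
      rw [Finset.sum_congr rfl fun i _ => hzi i]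
      simp
    rw [hzz, zero_mul]
  rw [hz, zero_add]
  conv_rhs => rw [Matrix.mul_apply]
  rw [Finset.sum_comm]
  refine Finset.sum_congr rfl fun m _ => ?_
  conv_rhs => rw [Matrix.mul_apply, Finset.sum_mul]
  refine Finset.sum_congr rfl fun l _ => ?_
  simp only [Matrix.transpose_apply]
  ring
end sim

section swaps
variable {α β γ : Type*} [Fintype α] [Fintype β] [Fintype γ]
lemma tsw12 (f : α → β → γ → ℝ) :
    ∑ a, ∑ b, ∑ c, f a b c = ∑ b, ∑ a, ∑ c, f a b c := Finset.sum_comm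
end swaps
variable {n mN : ℕ}

lemma pair_sum (Δm : Matrix (Fin mN) (Fin mN) ℝ) (β : Fin mN × Fin n → ℝ) :
    (β ⬝ᵥ fun kj => ∑ m, Δm kj.1 m * β (m, kj.2))
      + ((fun kj => ∑ m, Δm kj.1 m * β (m, kj.2)) ⬝ᵥ β)
    = ∑ j, (fun k => β (k,j)) ⬝ᵥ ((Δmᵀ + Δm).mulVec (fun k => β (k,j))) := by
  unfold dotProduct Matrix.mulVec dotProduct
  simp only [Fintype.sum_prod_type, Matrix.add_apply, Matrix.transpose_apply, add_mul, mul_add,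
    Finset.mul_sum, Finset.sum_mul, Finset.sum_add_distrib]
  congr 1
  · rw [tsw12]
    refine Finset.sum_congr rfl fun j _ => ?_
    rw [Finset.sum_comm]
    exact Finset.sum_congr rfl fun k _ => Finset.sum_congr rfl fun m _ => by ring
  · rw [tsw12]
    exact Finset.sum_congr rfl fun j _ => Finset.sum_congr rfl fun k _ =>
      Finset.sum_congr rfl fun m _ => by ring

variable {n mN : ℕ}

lemma amap_add (ζ : Fin (mN+1) → ℝ) (u v : Fin (mN+1) × Fin n → ℝ) :
    amap ζ (u + v) = amap ζ u + amap ζ v := by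
  funext j
  simp [amap, mul_add, Finset.sum_add_distrib]
end DO

theorem linear_distributed_observer_exponential_stability
    (n mN : ℕ) (hn : 0 < n)
    (p : Fin (mN + 1) → ℕ) (hp : ∀ i, 0 < p i)
    (A : Matrix (Fin n) (Fin n) ℝ)
    (Cm : ∀ i : Fin (mN + 1), Matrix (Fin (p i)) (Fin n) ℝ)
    (Pa : Matrix (Fin n) (Fin n) ℝ) (hPa : Pa.PosDef)
    (Y : Matrix (Fin n) ((i : Fin (mN + 1)) × Fin (p i)) ℝ)
    (ρ : ℝ) (hρ : 0 < ρ)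
    -- the stacked output matrix C
    (Cstack : Matrix ((i : Fin (mN + 1)) × Fin (p i)) (Fin n) ℝ)
    (hCstack : Cstack = Matrix.of fun q j => Cm q.1 q.2 j)
    -- the LMI  PaA + AᵀPa + YC + CᵀYᵀ + 2ρPa ≺ 0
    (hLMI : (-(Pa * A + Aᵀ * Pa + Y * Cstack + Cstackᵀ * Yᵀ + (2 * ρ) • Pa)).PosDef)
    -- graph data: Laplacian L, positive normalized left 0-eigenvector ζ
    (L : Matrix (Fin (mN + 1)) (Fin (mN + 1)) ℝ)
    (ζ : Fin (mN + 1) → ℝ)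
    (hζpos : ∀ i, 0 < ζ i)
    (hζ1 : ζ ⬝ᵥ (fun _ => (1 : ℝ)) = 1)
    (hL1 : L.mulVec (fun _ => (1 : ℝ)) = 0)
    (hζL : Matrix.vecMul ζ L = 0)
    -- Lemma-1 similarity data
    (Y₁ Y₂ : Matrix (Fin (mN + 1)) (Fin mN) ℝ)
    (hY21 : Y₂ᵀ * Y₁ = 1)
    (hζY1 : Matrix.vecMul ζ Y₁ = 0)
    (hY2one : Y₂ᵀ.mulVec (fun _ => (1 : ℝ)) = 0)
    -- Δᵀ + Δ ≻ 0 for Δ = Y₂ᵀ L Y₁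
    (hΔ : ((Y₂ᵀ * L * Y₁)ᵀ + Y₂ᵀ * L * Y₁).PosDef) :
    -- block matrices of the error dynamics, with gains H_i = H̄_i / ζ_i
    let Atil : Matrix (Fin (mN + 1) × Fin n) (Fin (mN + 1) × Fin n) ℝ :=
      (1 : Matrix (Fin (mN + 1)) (Fin (mN + 1)) ℝ) ⊗ₖ A
    let Htil : Matrix (Fin (mN + 1) × Fin n) ((i : Fin (mN + 1)) × Fin (p i)) ℝ :=
      Matrix.of fun x q => if x.1 = q.1 then (ζ q.1)⁻¹ * (Pa⁻¹ * Y) x.2 q else 0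
    let Ctil : Matrix ((i : Fin (mN + 1)) × Fin (p i)) (Fin (mN + 1) × Fin n) ℝ :=
      Matrix.of fun q x => if q.1 = x.1 then Cm q.1 q.2 x.2 else 0
    ∃ ν₀ > (0 : ℝ), ∃ κ > (0 : ℝ), ∀ ν : ℝ, ν₀ ≤ ν →
      ∀ e : ℝ → (Fin (mN + 1) × Fin n → ℝ),
        (∀ t : ℝ, 0 ≤ t → HasDerivAt e
          ((Atil + Htil * Ctil
              - ν • (L ⊗ₖ (1 : Matrix (Fin n) (Fin n) ℝ))).mulVec (e t)) t) →
        ∀ t : ℝ, 0 ≤ t →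
          euclNorm (e t) ≤ κ * Real.exp (-ρ * t) * euclNorm (e 0) := by
  intro Atil Htil Ctil
  classical
  have hAtil : Atil = (1 : Matrix (Fin (mN + 1)) (Fin (mN + 1)) ℝ) ⊗ₖ A := rfl
  have hHtil : Htil = (Matrix.of fun (x : Fin (mN+1) × Fin n)
      (q : (i : Fin (mN + 1)) × Fin (p i)) =>
      if x.1 = q.1 then (ζ q.1)⁻¹ * (Pa⁻¹ * Y) x.2 q else 0) := rfl
  have hCtil : Ctil = (Matrix.of fun (q : (i : Fin (mN + 1)) × Fin (p i))
      (x : Fin (mN+1) × Fin n) =>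
      if q.1 = x.1 then Cm q.1 q.2 x.2 else 0) := rfl
  set Ltil := L ⊗ₖ (1 : Matrix (Fin n) (Fin n) ℝ) with hLtil
  set A₀ := Atil + Htil * Ctil with hA0
  set Δm := Y₂ᵀ * L * Y₁ with hΔm
  set Pt := DO.Ptil ζ Y₂ Pa with hPt
  set K₀ := Pt * A₀ + A₀ᵀ * Pt + (2*ρ) • Pt with hK0
  set K₁ := Pt * Ltil + Ltilᵀ * Pt with hK1
  have hζne : ∀ i, ζ i ≠ 0 := fun i => (hζpos i).ne'
  have hPadet : IsUnit Pa.det := isUnit_iff_ne_zero.mpr hPa.det_pos.ne'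
  have hPasymm : Paᵀ = Pa := by have h := hPa.1; simp at h; exact h.eq
  have hY2L : Y₂ᵀ * L = Δm * Y₂ᵀ := DO.Y2L_eq L ζ Y₁ Y₂ hζ1 hY21 hζY1 hY2one hL1
  -- q K₁ as a sum of per-column Δᵀ+Δ forms
  have hq1 : ∀ x : Fin (mN+1) × Fin n → ℝ, DOHelper.q K₁ x
      = ∑ j, (fun k => DO.bmap Y₂ x (k,j)) ⬝ᵥ ((Δmᵀ + Δm).mulVec (fun k => DO.bmap Y₂ x (k,j))) := by
    intro x
    have hbL : DO.bmap Y₂ (Ltil.mulVec x)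
        = fun kj : Fin mN × Fin n => ∑ m, Δm kj.1 m * DO.bmap Y₂ x (m, kj.2) := by
      funext kj
      obtain ⟨k, j⟩ := kj
      rw [hLtil]
      exact DO.bmap_Ltil L Y₂ Δm hY2L x k j
    unfold DOHelper.q
    rw [hK1, Matrix.add_mulVec, dotProduct_add, ← Matrix.mulVec_mulVec,
      DOHelper.dot_pair, DO.dot_Ptil, DO.dot_Ptil]
    rw [hLtil] at hbL ⊢
    rw [DO.amap_Ltil L ζ hζL x]
    rw [Matrix.mulVec_zero, dotProduct_zero, zero_dotProduct, zero_add, zero_add, hbL]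
    exact DO.pair_sum Δm (DO.bmap Y₂ x)
  have hΔnn : ∀ v : Fin mN → ℝ, 0 ≤ v ⬝ᵥ (Δmᵀ + Δm).mulVec v := by
    intro v
    have := hΔ.posSemidef.dotProduct_mulVec_nonneg v
    simpa using this
  have hΔpos : ∀ v : Fin mN → ℝ, v ≠ 0 → 0 < v ⬝ᵥ (Δmᵀ + Δm).mulVec v := by
    intro v hv
    have := hΔ.dotProduct_mulVec_pos hv
    simpa using this
  have hq1nn : ∀ x, 0 ≤ DOHelper.q K₁ x := by
    intro x
    rw [hq1]
    exact Finset.sum_nonneg fun j _ => hΔnn _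
  have hker : ∀ x, DOHelper.q K₁ x = 0 → DO.bmap Y₂ x = 0 := by
    intro x hx0
    rw [hq1] at hx0
    have hcol : ∀ j, (fun k => DO.bmap Y₂ x (k,j)) = 0 := by
      intro j
      by_contra hc
      have hpos := hΔpos _ hc
      have hz : (fun k => DO.bmap Y₂ x (k,j)) ⬝ᵥ ((Δmᵀ + Δm).mulVec (fun k => DO.bmap Y₂ x (k,j))) = 0 :=
        (Finset.sum_eq_zero_iff_of_nonneg (fun j _ => hΔnn _)).mp hx0 j (Finset.mem_univ j)
      rw [hz] at hpos
      exact lt_irrefl 0 hpos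
    funext kj
    obtain ⟨k, j⟩ := kj
    exact congr_fun (hcol j) k
  have hq0neg : ∀ x, x ≠ 0 → DOHelper.q K₁ x = 0 → DOHelper.q K₀ x < 0 := by
    intro x hx hx0
    have hb : DO.bmap Y₂ x = 0 := hker x hx0
    set v := DO.amap ζ x with hv
    have hxv : ∀ i j, x (i,j) = v j := by
      intro i j
      rw [DO.decomp ζ Y₁ Y₂ hζ1 hY21 hζY1 hY2one x i j, hb]
      simp [hv]
    have hvne : v ≠ 0 := by
      intro hv0
      apply hx
      funext ij
      rw [show x ij = x (ij.1, ij.2) from rfl, hxv ij.1 ij.2, hv0]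
      rfl
    -- amap of the drift term
    have hamapA0 : DO.amap ζ (A₀.mulVec x)
        = A.mulVec v + (Pa⁻¹ * Y).mulVec (Cstack.mulVec v) := by
      have hcvec : DO.cvec Cm x = Cstack.mulVec v := by
        funext q
        unfold DO.cvec Matrix.mulVec dotProduct
        rw [hCstack]
        exact Finset.sum_congr rfl fun j' _ => by simp [hxv]
      rw [hA0, Matrix.add_mulVec, DO.amap_add, hAtil, DO.amap_Atil, hHtil, hCtil,
        DO.amap_HC ζ Cm (Pa⁻¹ * Y) hζne x, hcvec, ← hv]
    -- evaluate q K₀ x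
    have hqeq : DOHelper.q K₀ x
        = v ⬝ᵥ (Pa * A + Aᵀ * Pa + Y * Cstack + Cstackᵀ * Yᵀ + (2 * ρ) • Pa).mulVec v := by
      unfold DOHelper.q
      rw [hK0, Matrix.add_mulVec, Matrix.add_mulVec, dotProduct_add, dotProduct_add,
        ← Matrix.mulVec_mulVec, DOHelper.dot_pair, DO.dot_Ptil, DO.dot_Ptil,
        Matrix.smul_mulVec, dotProduct_smul, hb, hamapA0]
      rw [DO.dot_Ptil]
      rw [hb]
      simp only [dotProduct_zero, zero_dotProduct, add_zero]
      rw [show DO.amap ζ x = v from rfl]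
      -- LHS pieces
      have hPaW : Pa * (Pa⁻¹ * Y) = Y := Matrix.mul_nonsing_inv_cancel_left Pa Y hPadet
      have e1 : v ⬝ᵥ Pa.mulVec (A.mulVec v + (Pa⁻¹ * Y).mulVec (Cstack.mulVec v))
          = v ⬝ᵥ (Pa * A).mulVec v + v ⬝ᵥ (Y * Cstack).mulVec v := by
        rw [Matrix.mulVec_add, dotProduct_add]
        congr 1
        · rw [Matrix.mulVec_mulVec]
        · rw [Matrix.mulVec_mulVec, hPaW, Matrix.mulVec_mulVec]
      have e2 : (A.mulVec v + (Pa⁻¹ * Y).mulVec (Cstack.mulVec v)) ⬝ᵥ Pa.mulVec v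
          = v ⬝ᵥ (Aᵀ * Pa).mulVec v + v ⬝ᵥ (Cstackᵀ * Yᵀ).mulVec v := by
        rw [add_dotProduct]
        congr 1
        · rw [DOHelper.dot_pair]
        · rw [show Cstackᵀ * Yᵀ = (Y * Cstack)ᵀ from (Matrix.transpose_mul Y Cstack).symm,
            DOHelper.dot_transpose, DOHelper.dot_symm hPasymm, Matrix.mulVec_mulVec, hPaW,
            Matrix.mulVec_mulVec]
      rw [e1, e2]
      rw [Matrix.add_mulVec, Matrix.add_mulVec, Matrix.add_mulVec, Matrix.add_mulVec]
      simp only [dotProduct_add, Matrix.smul_mulVec, dotProduct_smul, smul_eq_mul]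
      ring
    rw [hqeq]
    have := hLMI.dotProduct_mulVec_pos hvne
    simp only [star_trivial, Matrix.neg_mulVec, dotProduct_neg] at this
    linarith
  have hPtpd : ∀ x, x ≠ 0 → 0 < DOHelper.q Pt x := by
    intro x hx
    have hq : DOHelper.q Pt x
        = DO.amap ζ x ⬝ᵥ Pa.mulVec (DO.amap ζ x) + DO.bmap Y₂ x ⬝ᵥ DO.bmap Y₂ x := by
      unfold DOHelper.q; rw [hPt]; exact DO.dot_Ptil ζ Y₂ Pa x x
    rw [hq]
    by_cases ha : DO.amap ζ x = 0
    · have hbne : DO.bmap Y₂ x ≠ 0 := by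
        intro hbz
        apply hx
        funext ij
        rw [show x ij = x (ij.1, ij.2) from rfl,
          DO.decomp ζ Y₁ Y₂ hζ1 hY21 hζY1 hY2one x ij.1 ij.2, ha, hbz]
        simp
      rw [ha]
      simpa using DOHelper.dot_self_pos hbne
    · have h1 : 0 < DO.amap ζ x ⬝ᵥ Pa.mulVec (DO.amap ζ x) := by simpa using hPa.dotProduct_mulVec_pos ha
      have h2 : 0 ≤ DO.bmap Y₂ x ⬝ᵥ DO.bmap Y₂ x := DOHelper.dot_self_nonneg _
      linarith
  obtain ⟨ν₀, hν₀pos, hν₀⟩ := DOHelper.exists_nu0 K₀ K₁ hq1nn hq0neg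
  obtain ⟨c₁, c₂, hc₁, hc₂, hbounds⟩ := DOHelper.exists_pd_bounds Pt hPtpd
  refine ⟨ν₀, hν₀pos, Real.sqrt (c₂ / c₁), Real.sqrt_pos.mpr (div_pos hc₂ hc₁), ?_⟩
  intro ν hν e he t ht
  -- the Lyapunov function decays
  have hdecay : ∀ s, 0 ≤ s → DOHelper.q Pt (e s)
      ≤ Real.exp (-(2*ρ) * s) * DOHelper.q Pt (e 0) := by
    have hmat : Pt * (A₀ - ν • Ltil) + (A₀ - ν • Ltil)ᵀ * Pt = K₀ - (2*ρ) • Pt - ν • K₁ := by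
      rw [hK0, hK1, Matrix.transpose_sub, Matrix.transpose_smul, Matrix.mul_sub,
        Matrix.sub_mul, mul_smul_comm, smul_mul_assoc, smul_add]
      abel
    have hVle : ∀ s, 0 ≤ s → DOHelper.q (Pt * (A₀ - ν • Ltil) + (A₀ - ν • Ltil)ᵀ * Pt) (e s)
        ≤ -(2*ρ) * DOHelper.q Pt (e s) := by
      intro s hs
      have h := hν₀ ν hν (e s)
      rw [hmat, DOHelper.q_subM, DOHelper.q_subM, DOHelper.q_smulM, DOHelper.q_smulM]
      linarith
    have hderiv : ∀ s, 0 ≤ s → HasDerivAt (fun u => DOHelper.q Pt (e u))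
        (DOHelper.q (Pt * (A₀ - ν • Ltil) + (A₀ - ν • Ltil)ᵀ * Pt) (e s)) s := by
      intro s hs
      have h := DOHelper.hasDerivAt_q Pt e ((A₀ - ν • Ltil).mulVec (e s)) s (he s hs)
      convert h using 1
      unfold DOHelper.q
      rw [Matrix.add_mulVec, dotProduct_add, ← Matrix.mulVec_mulVec, DOHelper.dot_pair]
      ring
    exact DOHelper.exp_decay (fun u => DOHelper.q Pt (e u)) _ (2*ρ) hderiv hVle
  -- numeric conclusion
  have h1 := (hbounds (e t)).1
  have h2 := (hbounds (e 0)).2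
  have h3 := hdecay t ht
  have hexp2 : Real.exp (-(2*ρ) * t) = Real.exp (-ρ * t) ^ 2 := by
    rw [sq, ← Real.exp_add]; ring_nf
  have hkey : e t ⬝ᵥ e t ≤ (c₂ / c₁) * (Real.exp (-ρ * t) ^ 2 * (e 0 ⬝ᵥ e 0)) := by
    have hchain : c₁ * (e t ⬝ᵥ e t) ≤ Real.exp (-ρ * t) ^ 2 * (c₂ * (e 0 ⬝ᵥ e 0)) := by
      rw [← hexp2]
      calc c₁ * (e t ⬝ᵥ e t) ≤ DOHelper.q Pt (e t) := h1
        _ ≤ Real.exp (-(2*ρ)*t) * DOHelper.q Pt (e 0) := h3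
        _ ≤ Real.exp (-(2*ρ)*t) * (c₂ * (e 0 ⬝ᵥ e 0)) :=
            mul_le_mul_of_nonneg_left h2 (Real.exp_nonneg _)
    have heq : c₁ * ((c₂ / c₁) * (Real.exp (-ρ * t) ^ 2 * (e 0 ⬝ᵥ e 0)))
        = Real.exp (-ρ*t)^2 * (c₂ * (e 0 ⬝ᵥ e 0)) := by
      field_simp
    refine le_of_mul_le_mul_left ?_ hc₁
    rw [heq]
    linarith
  unfold euclNorm
  calc Real.sqrt (e t ⬝ᵥ e t)
      ≤ Real.sqrt ((c₂/c₁) * (Real.exp (-ρ*t)^2 * (e 0 ⬝ᵥ e 0))) := Real.sqrt_le_sqrt hkey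
    _ = Real.sqrt (c₂/c₁) * (Real.exp (-ρ*t) * Real.sqrt (e 0 ⬝ᵥ e 0)) := by
        rw [Real.sqrt_mul (by positivity), Real.sqrt_mul (by positivity),
          Real.sqrt_sq (Real.exp_nonneg _)]
    _ = Real.sqrt (c₂/c₁) * Real.exp (-ρ*t) * Real.sqrt (e 0 ⬝ᵥ e 0) := by ring
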